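/- arXiv:2401.05445 — 2 statements merged into one kernel-verified Lean document; each statement's English description precedes it below -/
import Mathlib

section
/- The limit of τ(γ) = √(1/(2|1+γ|))·B(1/4 + (3-γ)/(4|1+γ|), 1/2) as γ → -1 equals √(π/2). -/
open Real Filter

/-- The complete Beta function `B(a,b) = Γ(a)Γ(b)/Γ(a+b)`. -/
noncomputable def betaFun (a b : ℝ) : ℝ :=
  Real.Gamma a * Real.Gamma b / Real.Gamma (a + b)

/-- The dimensionless collapse time `τ(γ) = √(η/2)·B(α,1/2)`. -/
noncomputable def tau (γ : ℝ) : ℝ :=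
  Real.sqrt ((1 / |1 + γ|) / 2) *
    betaFun (1 / 4 + (3 - γ) / (4 * |1 + γ|)) (1 / 2)

open Set in

lemma gammaA {x : ℝ} (hx : 0 < x) :
    Real.Gamma (x + 1/2) ≤ Real.sqrt (Real.Gamma x * Real.Gamma (x + 1)) := by
  have h := Real.convexOn_log_Gamma.2 (mem_Ioi.2 hx) (mem_Ioi.2 (by linarith : (0:ℝ) < x + 1))
    (by norm_num : (0:ℝ) ≤ 1/2) (by norm_num : (0:ℝ) ≤ 1/2) (by norm_num)
  simp only [smul_eq_mul, Function.comp] at h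
  have hx2 : (1:ℝ)/2 * x + 1/2 * (x + 1) = x + 1/2 := by ring
  rw [hx2] at h
  have hg1 : 0 < Real.Gamma x := Real.Gamma_pos_of_pos hx
  have hg2 : 0 < Real.Gamma (x + 1) := Real.Gamma_pos_of_pos (by linarith)
  have hg3 : 0 < Real.Gamma (x + 1/2) := Real.Gamma_pos_of_pos (by linarith)
  have key : Real.log (Real.Gamma (x + 1/2)) ≤ Real.log (Real.sqrt (Real.Gamma x * Real.Gamma (x+1))) := by
    rw [Real.log_sqrt (by positivity), Real.log_mul hg1.ne' hg2.ne']
    linarith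
  exact (Real.log_le_log_iff hg3 (Real.sqrt_pos.2 (by positivity))).1 key

lemma gammaB {x : ℝ} (hx : 0 < x) :
    Real.Gamma (x + 1/2) ≤ Real.sqrt x * Real.Gamma x := by
  have h := gammaA hx
  have hg1 : 0 ≤ Real.Gamma x := (Real.Gamma_pos_of_pos hx).le
  rw [Real.Gamma_add_one hx.ne', show Real.Gamma x * (x * Real.Gamma x) = x * Real.Gamma x ^ 2 by ring,
    Real.sqrt_mul hx.le, Real.sqrt_sq hg1] at h
  exact h

lemma gammaC {x : ℝ} (hx : 0 < x) :
    x * Real.Gamma x ≤ Real.sqrt (x + 1/2) * Real.Gamma (x + 1/2) := by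
  have h := gammaA (show (0:ℝ) < x + 1/2 by linarith)
  have hg : 0 ≤ Real.Gamma (x + 1/2) := (Real.Gamma_pos_of_pos (by linarith)).le
  have e1 : x + 1/2 + 1/2 = x + 1 := by ring
  rw [e1, Real.Gamma_add_one (by positivity : (x:ℝ) + 1/2 ≠ 0),
    show Real.Gamma (x+1/2) * ((x+1/2) * Real.Gamma (x+1/2)) = (x+1/2) * Real.Gamma (x+1/2) ^ 2 by ring,
    Real.sqrt_mul (by positivity), Real.sqrt_sq hg, Real.Gamma_add_one hx.ne'] at h
  exact h

lemma ratio_tendsto :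
    Tendsto (fun x : ℝ => Real.sqrt x * Real.Gamma x / Real.Gamma (x + 1/2)) atTop (nhds 1) := by
  have hub : Tendsto (fun x : ℝ => Real.sqrt ((x + 1/2) / x)) atTop (nhds 1) := by
    have h1 : Tendsto (fun x : ℝ => (x + 1/2) / x) atTop (nhds 1) := by
      have : Tendsto (fun x : ℝ => 1 + (1/2) * x⁻¹) atTop (nhds 1) := by
        have := tendsto_inv_atTop_zero (𝕜 := ℝ)
        have h2 := (this.const_mul (1/2 : ℝ)).const_add (1:ℝ)
        simpa using h2
      refine this.congr' ?_
      filter_upwards [eventually_gt_atTop (0:ℝ)] with x hx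
      field_simp
    have := (Real.continuous_sqrt.tendsto 1).comp h1
    simpa [Function.comp_def] using this
  refine tendsto_of_tendsto_of_tendsto_of_le_of_le' tendsto_const_nhds hub ?_ ?_
  · filter_upwards [eventually_gt_atTop (0:ℝ)] with x hx
    have hG : 0 < Real.Gamma (x + 1/2) := Real.Gamma_pos_of_pos (by linarith)
    rw [le_div_iff₀ hG, one_mul]
    exact gammaB hx
  · filter_upwards [eventually_gt_atTop (0:ℝ)] with x hx
    have hG : 0 < Real.Gamma (x + 1/2) := Real.Gamma_pos_of_pos (by linarith)
    have hsx : 0 < Real.sqrt x := Real.sqrt_pos.2 hx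
    rw [Real.sqrt_div (by positivity) x, div_le_div_iff₀ hG hsx]
    have e : Real.sqrt x * Real.Gamma x * Real.sqrt x = x * Real.Gamma x := by
      rw [mul_comm, ← mul_assoc, Real.mul_self_sqrt hx.le]
    rw [e]
    exact gammaC hx

theorem collapse_time_removable_singularity :
    Tendsto tau (nhdsWithin (-1) {(-1 : ℝ)}ᶜ) (nhds (Real.sqrt (π / 2))) := by
  set l := nhdsWithin (-1 : ℝ) {(-1 : ℝ)}ᶜ with hl
  set e : ℝ → ℝ := fun γ => |1 + γ| with he
  set α : ℝ → ℝ := fun γ => 1/4 + (3 - γ) / (4 * e γ) with hα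
  clear_value e α
  -- e is eventually positive
  have hepos : ∀ᶠ γ in l, 0 < e γ := by
    filter_upwards [self_mem_nhdsWithin] with γ hγ
    rw [he]
    refine abs_pos.2 fun h => hγ ?_
    simp only [Set.mem_singleton_iff]
    linarith
  -- e → 0 within positives
  have he0 : Tendsto e l (nhdsWithin 0 (Set.Ioi 0)) := by
    apply tendsto_nhdsWithin_of_tendsto_nhds_of_eventually_within
    · have : Continuous e := by continuity
      have := this.tendsto (-1)
      simp only [he] at this ⊢
      have h0 : |1 + (-1 : ℝ)| = 0 := by norm_num
      rw [h0] at this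
      exact this.mono_left nhdsWithin_le_nhds
    · exact hepos
  -- α → ∞
  have hαtop : Tendsto α l atTop := by
    have h1 : Tendsto (fun γ => (e γ)⁻¹) l atTop := tendsto_inv_nhdsGT_zero.comp he0
    have h2 : Tendsto (fun γ : ℝ => (3 - γ) / 4) l (nhds 1) := by
      have : Tendsto (fun γ : ℝ => (3 - γ) / 4) (nhds (-1)) (nhds ((3 - (-1))/4)) := by
        apply Filter.Tendsto.div_const
        exact (tendsto_const_nhds.sub tendsto_id)
      norm_num at this
      exact this.mono_left nhdsWithin_le_nhds
    have h3 : Tendsto (fun γ => (3 - γ) / 4 * (e γ)⁻¹) l atTop := h2.pos_mul_atTop one_pos h1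
    have h4 : Tendsto (fun γ => 1/4 + (3 - γ) / 4 * (e γ)⁻¹) l atTop :=
      tendsto_atTop_add_const_left _ _ h3
    refine h4.congr' ?_
    filter_upwards [hepos] with γ hγ
    simp only [hα]
    field_simp
  have hα1 : ∀ᶠ γ in l, 1 ≤ α γ := hαtop.eventually_ge_atTop 1
  -- the sqrt-factor S
  have hS : Tendsto (fun γ => Real.sqrt (((1 / e γ) / 2) / α γ)) l (nhds (Real.sqrt (1/2))) := by
    have hq : Tendsto (fun γ => 1 / (2 * (e γ / 4 + (3 - γ) / 4))) l (nhds (1/2)) := by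
      have hd : Tendsto (fun γ : ℝ => 2 * (e γ / 4 + (3 - γ) / 4)) (nhds (-1)) (nhds 2) := by
        have hc : Continuous fun γ : ℝ => 2 * (e γ / 4 + (3 - γ) / 4) := by
          simp only [he]; continuity
        have h := hc.tendsto (-1)
        have h0 : e (-1) = 0 := by simp [he]
        rw [h0] at h
        norm_num at h
        exact h
      have := (tendsto_const_nhds (x := (1:ℝ))).div hd (by norm_num)
      norm_num at this
      exact this.mono_left nhdsWithin_le_nhds
    have hsq := (Real.continuous_sqrt.tendsto (1/2)).comp hq
    refine hsq.congr' ?_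
    filter_upwards [hepos, hα1] with γ hγ hγ1
    have hαpos : 0 < α γ := by linarith
    simp only [Function.comp]
    congr 1
    have hae : e γ * α γ = e γ / 4 + (3 - γ) / 4 := by
      simp only [hα]
      field_simp
    rw [← hae]
    field_simp
  -- ratio factor
  have hF : Tendsto (fun γ => Real.sqrt (α γ) * Real.Gamma (α γ) / Real.Gamma (α γ + 1/2)) l (nhds 1) :=
    ratio_tendsto.comp hαtop
  -- combine
  have hmain : Tendsto (fun γ => Real.sqrt π * (Real.sqrt (α γ) * Real.Gamma (α γ) / Real.Gamma (α γ + 1/2)) *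
      Real.sqrt (((1 / e γ) / 2) / α γ)) l (nhds (Real.sqrt π * 1 * Real.sqrt (1/2))) :=
    (tendsto_const_nhds.mul hF).mul hS
  have hval : Real.sqrt π * 1 * Real.sqrt (1/2) = Real.sqrt (π / 2) := by
    rw [mul_one, ← Real.sqrt_mul Real.pi_pos.le]
    congr 1
    ring
  rw [hval] at hmain
  refine hmain.congr' ?_
  filter_upwards [hepos, hα1] with γ hγ hγ1
  have hαpos : 0 < α γ := by linarith
  have hG : 0 < Real.Gamma (α γ + 1/2) := Real.Gamma_pos_of_pos (by linarith)
  have hsα : 0 < Real.sqrt (α γ) := Real.sqrt_pos.2 hαpos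
  have hsplit : Real.sqrt (((1 / e γ) / 2) / α γ) = Real.sqrt ((1 / e γ) / 2) / Real.sqrt (α γ) :=
    Real.sqrt_div (by positivity) _
  rw [hsplit]
  show Real.sqrt π * (Real.sqrt (α γ) * Real.Gamma (α γ) / Real.Gamma (α γ + 1/2)) *
      (Real.sqrt ((1 / e γ) / 2) / Real.sqrt (α γ)) = tau γ
  have hee : |1 + γ| = e γ := by rw [he]
  rw [tau, betaFun, Real.Gamma_one_half_eq, hee]
  rw [show (1:ℝ)/4 + (3 - γ) / (4 * e γ) = α γ from by rw [hα]]
  field_simp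
end

section
/- For all real γ ≠ -1, the collapse times satisfy the symmetry τ(γ)·τ(-2-γ) = π/2, where τ(γ) = √(1/(2|1+γ|))·B(1/4 + (3-γ)/(4|1+γ|), 1/2). -/
open Real

lemma beta_half_mul (a : ℝ) (ha : 0 < a) :
    betaFun a (1/2) * betaFun (a + 1/2) (1/2) = π / a := by
  unfold betaFun
  have h1 : a + 1/2 + 1/2 = a + 1 := by ring
  rw [h1, Real.Gamma_add_one (ne_of_gt ha), Real.Gamma_one_half_eq]
  have h2 : Real.Gamma (a + 1/2) ≠ 0 := (Real.Gamma_pos_of_pos (by linarith)).ne'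
  have h3 : Real.Gamma a ≠ 0 := (Real.Gamma_pos_of_pos ha).ne'
  have h4 : Real.sqrt π * Real.sqrt π = π := Real.mul_self_sqrt pi_pos.le
  rw [div_mul_div_comm,
    show Real.Gamma a * Real.sqrt π * (Real.Gamma (a + 1/2) * Real.sqrt π)
      = (Real.Gamma a * Real.Gamma (a + 1/2)) * π by linear_combination (Real.Gamma a * Real.Gamma (a + 1/2)) * h4,
    show Real.Gamma (a + 1/2) * (a * Real.Gamma a)
      = (Real.Gamma a * Real.Gamma (a + 1/2)) * a by ring,
    mul_div_mul_left _ _ (mul_ne_zero h3 h2)]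

theorem collapse_time_symmetry (γ : ℝ) (hγ : γ ≠ -1) :
    tau γ * tau (-2 - γ) = π / 2 := by
  have habs : |1 + (-2 - γ)| = |1 + γ| := by
    rw [show (1 + (-2 - γ)) = -(1 + γ) by ring, abs_neg]
  have hu : (0:ℝ) < |1 + γ| := abs_pos.mpr (by intro h; apply hγ; linarith)
  set u := |1 + γ| with hudef
  have hsq : Real.sqrt ((1 / u) / 2) * Real.sqrt ((1 / u) / 2) = 1 / (2 * u) := by
    rw [Real.mul_self_sqrt (by positivity)]; ring
  unfold tau
  rw [habs]
  rcases abs_cases (1 + γ) with ⟨he, _⟩ | ⟨he, _⟩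
  · -- u = 1 + γ, γ > -1
    have hugt : u = 1 + γ := he
    have h1γ : (0:ℝ) < 1 + γ := by rw [← hugt]; exact hu
    have hune := hu.ne'
    have hA : 1 / 4 + (3 - γ) / (4 * u) = 1 / u := by
      field_simp
      rw [hugt]; ring
      try exact Or.inl trivial
    have hB : 1 / 4 + (3 - (-2 - γ)) / (4 * u) = 1 / u + 1 / 2 := by
      field_simp
      rw [hugt]; ring
      try exact Or.inl trivial
    rw [hA, hB]
    have := beta_half_mul (1/u) (by positivity)
    calc Real.sqrt (1 / u / 2) * betaFun (1/u) (1/2) *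
          (Real.sqrt (1 / u / 2) * betaFun (1/u + 1/2) (1/2))
        = (Real.sqrt (1/u/2) * Real.sqrt (1/u/2)) *
          (betaFun (1/u) (1/2) * betaFun (1/u + 1/2) (1/2)) := by ring
      _ = (1 / (2*u)) * (π / (1/u)) := by rw [hsq, this]
      _ = π / 2 := by field_simp
  · -- u = -(1+γ), γ < -1
    have hugt : u = -(1 + γ) := he
    have h1γ : (0:ℝ) < -(1 + γ) := by rw [← hugt]; exact hu
    have hune := hu.ne'
    have hA : 1 / 4 + (3 - γ) / (4 * u) = 1 / u + 1 / 2 := by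
      field_simp
      rw [hugt]; ring
      try exact Or.inl trivial
    have hB : 1 / 4 + (3 - (-2 - γ)) / (4 * u) = 1 / u := by
      field_simp
      rw [hugt]; ring
      try exact Or.inl trivial
    rw [hA, hB]
    have := beta_half_mul (1/u) (by positivity)
    calc Real.sqrt (1 / u / 2) * betaFun (1/u + 1/2) (1/2) *
          (Real.sqrt (1 / u / 2) * betaFun (1/u) (1/2))
        = (Real.sqrt (1/u/2) * Real.sqrt (1/u/2)) *
          (betaFun (1/u) (1/2) * betaFun (1/u + 1/2) (1/2)) := by ring
      _ = (1 / (2*u)) * (π / (1/u)) := by rw [hsq, this]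
      _ = π / 2 := by field_simp
end
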